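/- Let n ≥ 1 and let π : ℝ^n → ℝ be concave, monotone and translation-invariant. Then for every K ∈ ℝ^n, π(K) = inf { λ·K + π̃(λ) : λ a probability vector }, and this infimum is attained at some probability vector λ (at which π̃(λ) is finite). -/

import Mathlib

open scoped BigOperators

/-- For a concave, monotone, translation-invariant `π : ℝ^n → ℝ` and any `K`,
`π(K) = inf { λ·K + π̃(λ) : λ a probability vector }` and the infimum is attained at some
probability vector `λ` at which the concave dual `π̃(λ)` is finite. -/
theorem stmt_4 (n : ℕ) (hn : 1 ≤ n) (π : (Fin n → ℝ) → ℝ)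
    (hconc : ConcaveOn ℝ Set.univ π)
    (hmono : Monotone π)
    (hti : ∀ (K : Fin n → ℝ) (a : ℝ), π (fun y => K y + a) = π K + a)
    (K : Fin n → ℝ) :
    ∃ l : Fin n → ℝ, (∀ y, 0 ≤ l y) ∧ (∑ y, l y = 1) ∧
      (⨆ K' : Fin n → ℝ, ((π K' - ∑ y, l y * K' y : ℝ) : EReal)) ≠ ⊤ ∧
      ((π K : ℝ) : EReal)
        = ((∑ y, l y * K y : ℝ) : EReal)
          + (⨆ K' : Fin n → ℝ, ((π K' - ∑ y, l y * K' y : ℝ) : EReal)) ∧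
      ∀ l' : Fin n → ℝ, (∀ y, 0 ≤ l' y) → (∑ y, l' y = 1) →
        ((π K : ℝ) : EReal)
          ≤ ((∑ y, l' y * K y : ℝ) : EReal)
            + (⨆ K' : Fin n → ℝ, ((π K' - ∑ y, l' y * K' y : ℝ) : EReal)) := by
  -- π is continuous
  have hcont : Continuous π := by
    exact continuousOn_univ.mp (hconc.continuousOn (C := Set.univ) isOpen_univ)
  -- strict hypograph is open and convex
  set S : Set ((Fin n → ℝ) × ℝ) := { p | p.2 < π p.1 } with hS
  have hSconv : Convex ℝ S := by
    have := hconc.convex_strict_hypograph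
    simpa using this
  have hSopen : IsOpen S := by
    have : S = (fun p : (Fin n → ℝ) × ℝ => p.2 - π p.1) ⁻¹' Set.Iio 0 := by
      ext p; simp [hS, sub_neg]
    rw [this]
    exact (continuous_snd.sub (hcont.comp continuous_fst)).isOpen_preimage _ isOpen_Iio
  have hKnot : (K, π K) ∉ S := by simp [hS]
  obtain ⟨f, hf⟩ := geometric_hahn_banach_open_point hSconv hSopen hKnot
  set c : ℝ := f (0, 1) with hc
  have hsplit : ∀ (x : Fin n → ℝ) (t : ℝ), f (x, t) = f (x, 0) + t * c := by
    intro x t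
    have : (x, t) = (x, (0 : ℝ)) + t • ((0 : Fin n → ℝ), (1 : ℝ)) := by
      simp [Prod.ext_iff]
    rw [this, map_add, map_smul]
    simp [hc, smul_eq_mul]
  have hfK : ∀ (x : Fin n → ℝ) (t : ℝ), t < π x → f (x, 0) + t * c < f (K, 0) + π K * c := by
    intro x t ht
    have h0 := hf (x, t) ht
    have e1 := hsplit x t
    have e2 := hsplit K (π K)
    rw [e1, e2] at h0
    exact h0
  have hcpos : 0 < c := by
    have := hfK K (π K - 1) (by linarith)
    nlinarith
  -- key supergradient-type inequality
  have hkey : ∀ x : Fin n → ℝ, f (x, 0) + π x * c ≤ f (K, 0) + π K * c := by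
    intro x
    by_contra h
    push_neg at h
    set A := f (x, 0) + π x * c with hA
    set B := f (K, 0) + π K * c with hB
    have hε : (0 : ℝ) < (A - B) / (2 * c) := div_pos (by linarith) (by linarith)
    have := hfK x (π x - (A - B) / (2 * c)) (by linarith)
    have hcancel : ((A - B) / (2 * c)) * c = (A - B) / 2 := by
      field_simp
    nlinarith
  have hflin : ∀ x : Fin n → ℝ, f (x, 0) = ∑ y, x y * f ((Pi.single y 1 : Fin n → ℝ), 0) := by
    intro x
    have h := LinearMap.pi_apply_eq_sum_univ
      ((f : (Fin n → ℝ) × ℝ →ₗ[ℝ] ℝ).comp (LinearMap.inl ℝ (Fin n → ℝ) ℝ)) x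
    have hsingle : ∀ y : Fin n, (Pi.single y 1 : Fin n → ℝ) = fun j => if y = j then 1 else 0 := by
      intro y; funext j; simp [Pi.single_apply, eq_comm]
    simp only [hsingle]
    simpa [smul_eq_mul] using h
  set l : Fin n → ℝ := fun y => -(f ((Pi.single y 1 : Fin n → ℝ), 0)) / c with hl
  -- l · x = - f(x,0) / c
  have hdot : ∀ x : Fin n → ℝ, ∑ y, l y * x y = -(f (x, 0)) / c := by
    intro x
    rw [hflin x, neg_div, Finset.sum_div, ← Finset.sum_neg_distrib]
    refine Finset.sum_congr rfl fun y _ => ?_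
    simp only [hl]
    ring
  -- main supergradient inequality in terms of l
  have hsg : ∀ x : Fin n → ℝ, π x - ∑ y, l y * x y ≤ π K - ∑ y, l y * K y := by
    intro x
    have h1 := hkey x
    rw [hdot, hdot]
    have h2 : f (x, 0) / c + π x ≤ f (K, 0) / c + π K := by
      rw [div_add' _ _ _ hcpos.ne', div_add' _ _ _ hcpos.ne',
        div_le_div_iff_of_pos_right hcpos]
      nlinarith
    have : -(f (x,0)) / c = -(f (x,0) / c) := by ring
    rw [this]
    have : -(f (K,0)) / c = -(f (K,0) / c) := by ring
    rw [this]
    linarith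
  -- nonnegativity of l
  have hlnn : ∀ y, 0 ≤ l y := by
    intro y
    set e : Fin n → ℝ := (Pi.single y 1 : Fin n → ℝ) with he
    have hKle : K ≤ K + e := by
      intro z
      simp only [Pi.add_apply]
      have : (0:ℝ) ≤ e z := by
        rcases eq_or_ne z y with rfl | h
        · simp [he]
        · simp [he, Pi.single_apply, h]
      linarith
    have hm := hmono hKle
    have hs := hsg (K + e)
    have hsum : ∑ z, l z * (K + e) z = (∑ z, l z * K z) + l y := by
      have h1 : ∀ z, l z * (K + e) z = l z * K z + l z * e z := by
        intro z; simp only [Pi.add_apply]; ring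
      rw [Finset.sum_congr rfl fun z _ => h1 z, Finset.sum_add_distrib]
      congr 1
      rw [Finset.sum_eq_single y]
      · simp [he]
      · intro b _ hb; simp [he, Pi.single_apply, hb]
      · intro h; exact absurd (Finset.mem_univ y) h
    rw [hsum] at hs
    linarith
  -- sum of l equals 1
  have hlsum : ∑ y, l y = 1 := by
    have haux : ∀ a : ℝ, a * (1 - ∑ y, l y) ≤ 0 := by
      intro a
      have hs := hsg (fun z => K z + a)
      have hπ := hti K a
      have hsum : ∑ z, l z * (K z + a) = (∑ z, l z * K z) + a * ∑ z, l z := by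
        rw [Finset.mul_sum]
        rw [← Finset.sum_add_distrib]
        refine Finset.sum_congr rfl fun z _ => ?_
        ring
      simp only [hπ] at hs
      rw [hsum] at hs
      nlinarith
    have h1 := haux 1
    have h2 := haux (-1)
    nlinarith
  -- the supremum equals π K - l·K
  have hsup : (⨆ K' : Fin n → ℝ, ((π K' - ∑ y, l y * K' y : ℝ) : EReal))
      = ((π K - ∑ y, l y * K y : ℝ) : EReal) := by
    apply le_antisymm
    · exact iSup_le fun K' => EReal.coe_le_coe_iff.2 (hsg K')
    · exact le_iSup (fun K' : Fin n → ℝ => ((π K' - ∑ y, l y * K' y : ℝ) : EReal)) K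
  refine ⟨l, hlnn, hlsum, ?_, ?_, ?_⟩
  · rw [hsup]; exact EReal.coe_ne_top _
  · rw [hsup, ← EReal.coe_add]
    norm_num
  · intro l' _ _
    have h1 : ((π K - ∑ y, l' y * K y : ℝ) : EReal)
        ≤ ⨆ K' : Fin n → ℝ, ((π K' - ∑ y, l' y * K' y : ℝ) : EReal) :=
      le_iSup (fun K' : Fin n → ℝ => ((π K' - ∑ y, l' y * K' y : ℝ) : EReal)) K
    calc ((π K : ℝ) : EReal)
        = ((∑ y, l' y * K y : ℝ) : EReal) + ((π K - ∑ y, l' y * K y : ℝ) : EReal) := by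
          rw [← EReal.coe_add]; norm_num
      _ ≤ _ := add_le_add le_rfl h1
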